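/- There exists a universal constant C ∈ (0, ∞) such that for every p ∈ [2, ∞), every s ∈ (0, ∞) with e^s > √p, every n ∈ ℕ, and every h : {−1,1}^n → ℝ, ‖e^{−sΔ_{[n]}}(h − Rad_0 h)‖_p ≤ C·√p/(e^s − √p)·‖h‖_p, i.e. the operator norm of e^{−sΔ_{[n]}}(I − Rad_0) on L_p({−1,1}^n) is at most C√p/(e^s − √p). -/

import Mathlib

open Finset

/-- The normalized `L_p` norm of a function on the discrete hypercube `{-1,1}^n`
(coordinates encoded by `Bool`). -/
noncomputable def pnorm {n : ℕ} (p : ℝ) (h : (Fin n → Bool) → ℝ) : ℝ :=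
  ((∑ ε : Fin n → Bool, |h ε| ^ p) / 2 ^ n) ^ (1 / p)

/-- The Walsh function `W_A(ε) = Π_{j ∈ A} ε_j`. -/
def walsh {n : ℕ} (A : Finset (Fin n)) (ε : Fin n → Bool) : ℝ :=
  ∏ j ∈ A, (if ε j then (1 : ℝ) else -1)

/-- The Fourier–Walsh coefficient `ĥ(A) = 2^{-n} Σ_ε h(ε) W_A(ε)`. -/
noncomputable def fourierCoef {n : ℕ} (h : (Fin n → Bool) → ℝ) (A : Finset (Fin n)) : ℝ :=
  (∑ ε : Fin n → Bool, h ε * walsh A ε) / 2 ^ n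

/-- `Δ_S^α h = Σ_{A ∩ S ≠ ∅} |A ∩ S|^α ĥ(A) W_A`. -/
noncomputable def deltaPow {n : ℕ} (S : Finset (Fin n)) (α : ℝ) (h : (Fin n → Bool) → ℝ) :
    (Fin n → Bool) → ℝ :=
  fun ε => ∑ A : Finset (Fin n),
    if (A ∩ S).Nonempty then ((A ∩ S).card : ℝ) ^ α * fourierCoef h A * walsh A ε else 0

/-- `E_S h`: averaging of `h` over the coordinates in `S`. -/
noncomputable def condAvg {n : ℕ} (S : Finset (Fin n)) (h : (Fin n → Bool) → ℝ) :
    (Fin n → Bool) → ℝ :=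
  fun ε => (∑ δ : Fin n → Bool, h (fun j => if j ∈ S then δ j else ε j)) / 2 ^ n

/-- The heat semigroup of the hypercube Laplacian: `e^{-sΔ_{[n]}} h = Σ_A e^{-s|A|} ĥ(A) W_A`. -/
noncomputable def heatSemigroup {n : ℕ} (s : ℝ) (h : (Fin n → Bool) → ℝ) :
    (Fin n → Bool) → ℝ :=
  fun ε => ∑ A : Finset (Fin n), Real.exp (-(s * A.card)) * fourierCoef h A * walsh A ε

namespace HCaux

/-- AM-GM style: for `0 < t < 1` and `c ≤ 0`, `(1+t)^c + (1-t)^c ≥ 2`. -/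
lemma two_le_rpow_add_rpow {t c : ℝ} (ht0 : 0 < t) (ht1 : t < 1) (hc : c ≤ 0) :
    2 ≤ (1 + t) ^ c + (1 - t) ^ c := by
  have h1 : (0:ℝ) < 1 + t := by linarith
  have h2 : (0:ℝ) < 1 - t := by linarith
  have hu : (0:ℝ) < (1 + t) ^ c := Real.rpow_pos_of_pos h1 c
  have hv : (0:ℝ) < (1 - t) ^ c := Real.rpow_pos_of_pos h2 c
  have hprod : 1 ≤ (1 + t) ^ c * (1 - t) ^ c := by
    rw [← Real.mul_rpow h1.le h2.le]
    have hlt : (1 + t) * (1 - t) ≤ 1 := by nlinarith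
    have hpos : (0:ℝ) < (1 + t) * (1 - t) := mul_pos h1 h2
    calc (1:ℝ) = 1 ^ c := (Real.one_rpow c).symm
    _ ≤ ((1 + t) * (1 - t)) ^ c := by
        exact Real.rpow_le_rpow_of_nonpos hpos hlt hc
  nlinarith [sq_nonneg ((1 + t) ^ c - (1 - t) ^ c)]

/-- Step A: for `1 ≤ p ≤ 2` and `t ∈ [0,1]`,
`1 + p(p-1)/2 t² ≤ ((1+t)^p + (1-t)^p)/2`. -/
lemma stepA {p : ℝ} (hp1 : 1 ≤ p) (hp2 : p ≤ 2) {t : ℝ} (ht0 : 0 ≤ t) (ht1 : t ≤ 1) :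
    1 + p * (p - 1) / 2 * t ^ 2 ≤ ((1 + t) ^ p + (1 - t) ^ p) / 2 := by
  have hp0 : (0:ℝ) ≤ p := by linarith
  -- the inner function ψ
  set ψ : ℝ → ℝ := fun t => (1 + t) ^ (p - 1) - (1 - t) ^ (p - 1) - 2 * (p - 1) * t with hψ
  have hψcont : ContinuousOn ψ (Set.Icc 0 1) := by
    apply ContinuousOn.sub
    apply ContinuousOn.sub
    · exact ((continuous_const.add continuous_id).continuousOn).rpow_const
        (fun x _ => Or.inr (by linarith))
    · exact ((continuous_const.sub continuous_id).continuousOn).rpow_const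
        (fun x _ => Or.inr (by linarith))
    · exact (continuous_const.mul continuous_id).continuousOn
  have hψderiv : ∀ x ∈ Set.Ioo (0:ℝ) 1, HasDerivAt ψ
      ((p-1) * (1 + x) ^ (p - 2) + (p-1) * (1 - x) ^ (p - 2) - 2 * (p - 1)) x := by
    intro x hx
    obtain ⟨hx0, hx1⟩ := hx
    have h1 : (0:ℝ) < 1 + x := by linarith
    have h2 : (0:ℝ) < 1 - x := by linarith
    have d1 : HasDerivAt (fun t : ℝ => (1 + t) ^ (p - 1)) (1 * (p-1) * (1 + x) ^ (p - 1 - 1)) x := by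
      exact (HasDerivAt.const_add 1 (hasDerivAt_id x)).rpow_const (Or.inl h1.ne')
    have d2 : HasDerivAt (fun t : ℝ => (1 - t) ^ (p - 1)) ((-1) * (p-1) * (1 - x) ^ (p - 1 - 1)) x := by
      exact (HasDerivAt.const_sub 1 (hasDerivAt_id x)).rpow_const (Or.inl h2.ne')
    have d3 : HasDerivAt (fun t : ℝ => 2 * (p - 1) * t) (2 * (p - 1)) x := by
      simpa using (hasDerivAt_id x).const_mul (2 * (p-1))
    have := (d1.sub d2).sub d3
    rw [show p - 1 - 1 = p - 2 by ring] at this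
    refine this.congr_deriv ?_
    ring
  have hψ0 : ψ 0 = 0 := by simp [hψ]
  have hψnonneg : ∀ t ∈ Set.Icc (0:ℝ) 1, 0 ≤ ψ t := by
    intro t ht
    have hmono : MonotoneOn ψ (Set.Icc 0 1) := by
      apply monotoneOn_of_deriv_nonneg (convex_Icc 0 1) hψcont
      · intro x hx
        rw [interior_Icc] at hx
        exact (hψderiv x hx).differentiableAt.differentiableWithinAt
      · intro x hx
        rw [interior_Icc] at hx
        rw [(hψderiv x hx).deriv]
        have h2 : 2 ≤ (1 + x) ^ (p - 2) + (1 - x) ^ (p - 2) :=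
          two_le_rpow_add_rpow hx.1 hx.2 (by linarith)
        have : 0 ≤ p - 1 := by linarith
        nlinarith
    have := hmono (Set.left_mem_Icc.2 zero_le_one) ht ht.1
    rwa [hψ0] at this
  -- the outer function φ
  set φ : ℝ → ℝ := fun t => ((1 + t) ^ p + (1 - t) ^ p) / 2 - (1 + p * (p - 1) / 2 * t ^ 2) with hφ
  have hφcont : ContinuousOn φ (Set.Icc 0 1) := by
    apply ContinuousOn.sub
    · apply ContinuousOn.div_const
      apply ContinuousOn.add
      · exact ((continuous_const.add continuous_id).continuousOn).rpow_const
          (fun x _ => Or.inr hp0)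
      · exact ((continuous_const.sub continuous_id).continuousOn).rpow_const
          (fun x _ => Or.inr hp0)
    · exact (continuous_const.add (continuous_const.mul (continuous_pow 2))).continuousOn
  have hφderiv : ∀ x ∈ Set.Ioo (0:ℝ) 1, HasDerivAt φ (p / 2 * ψ x) x := by
    intro x hx
    obtain ⟨hx0, hx1⟩ := hx
    have h1 : (0:ℝ) < 1 + x := by linarith
    have h2 : (0:ℝ) < 1 - x := by linarith
    have d1 : HasDerivAt (fun t : ℝ => (1 + t) ^ p) (1 * p * (1 + x) ^ (p - 1)) x :=
      (HasDerivAt.const_add 1 (hasDerivAt_id x)).rpow_const (Or.inl h1.ne')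
    have d2 : HasDerivAt (fun t : ℝ => (1 - t) ^ p) ((-1) * p * (1 - x) ^ (p - 1)) x :=
      (HasDerivAt.const_sub 1 (hasDerivAt_id x)).rpow_const (Or.inl h2.ne')
    have d3 : HasDerivAt (fun t : ℝ => 1 + p * (p - 1) / 2 * t ^ 2)
        (p * (p - 1) / 2 * (2 * x)) x := by
      have : HasDerivAt (fun t : ℝ => t ^ 2) (2 * x) x := by
        simpa using hasDerivAt_pow 2 x
      simpa using (this.const_mul (p * (p-1)/2)).const_add 1
    have := ((d1.add d2).div_const 2).sub d3
    refine this.congr_deriv ?_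
    simp only [hψ]
    ring
  have hφmono : MonotoneOn φ (Set.Icc 0 1) := by
    apply monotoneOn_of_deriv_nonneg (convex_Icc 0 1) hφcont
    · intro x hx
      rw [interior_Icc] at hx
      exact (hφderiv x hx).differentiableAt.differentiableWithinAt
    · intro x hx
      rw [interior_Icc] at hx
      rw [(hφderiv x hx).deriv]
      have := hψnonneg x ⟨hx.1.le, hx.2.le⟩
      have hp0' : 0 ≤ p / 2 := by linarith
      positivity
  have hφ0 : φ 0 = 0 := by simp [hφ]
  have := hφmono (Set.left_mem_Icc.2 zero_le_one) ⟨ht0, ht1⟩ ht0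
  rw [hφ0] at this
  simp only [hφ] at this
  linarith


/-- core scalar inequality for `t ∈ [0,1]`. -/
lemma stepB_core {p : ℝ} (hp1 : 1 ≤ p) (hp2 : p ≤ 2) {t : ℝ} (ht0 : 0 ≤ t) (ht1 : t ≤ 1) :
    1 + (p - 1) * t ^ 2 ≤ (((1 + t) ^ p + (1 - t) ^ p) / 2) ^ (2 / p) := by
  have hp0 : (0:ℝ) < p := by linarith
  set K := ((1 + t) ^ p + (1 - t) ^ p) / 2 with hK
  have hs0 : 0 ≤ (p - 1) * t ^ 2 := by nlinarith
  have hbern : (1 + (p - 1) * t ^ 2) ^ (p / 2) ≤ 1 + p * (p - 1) / 2 * t ^ 2 := by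
    have := rpow_one_add_le_one_add_mul_self (s := (p - 1) * t ^ 2)
      (by linarith) (p := p / 2) (by linarith) (by linarith)
    calc (1 + (p - 1) * t ^ 2) ^ (p / 2) ≤ 1 + p / 2 * ((p - 1) * t ^ 2) := this
    _ = 1 + p * (p - 1) / 2 * t ^ 2 := by ring
  have h1 : (1 + (p - 1) * t ^ 2) ^ (p / 2) ≤ K := le_trans hbern (stepA hp1 hp2 ht0 ht1)
  have hbase : (0:ℝ) ≤ 1 + (p - 1) * t ^ 2 := by linarith
  have := Real.rpow_le_rpow (Real.rpow_nonneg hbase _) h1 (by positivity : (0:ℝ) ≤ 2 / p)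
  rwa [← Real.rpow_mul hbase, show p / 2 * (2 / p) = 1 by field_simp, Real.rpow_one] at this

/-- Step B for `0 ≤ b ≤ a`. -/
lemma stepB0 {p : ℝ} (hp1 : 1 ≤ p) (hp2 : p ≤ 2) {a b : ℝ} (hb : 0 ≤ b) (hba : b ≤ a) :
    a ^ 2 + (p - 1) * b ^ 2 ≤ (((a + b) ^ p + (a - b) ^ p) / 2) ^ (2 / p) := by
  have hp0 : (0:ℝ) < p := by linarith
  rcases eq_or_lt_of_le (hb.trans hba) with h | ha
  · -- a = 0, hence b = 0
    have ha0 : a = 0 := h.symm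
    have hb0 : b = 0 := le_antisymm (ha0 ▸ hba) hb
    rw [ha0, hb0]
    norm_num [Real.zero_rpow hp0.ne', Real.zero_rpow (by positivity : (0:ℝ) < 2/p).ne']
  · set t := b / a with htdef
    have ht0 : 0 ≤ t := div_nonneg hb ha.le
    have ht1 : t ≤ 1 := (div_le_one ha).2 hba
    have hab : a + b = a * (1 + t) := by rw [htdef]; field_simp
    have hab' : a - b = a * (1 - t) := by rw [htdef]; field_simp
    have h1t : (0:ℝ) ≤ 1 + t := by linarith
    have h2t : (0:ℝ) ≤ 1 - t := by linarith
    have expand : ((a + b) ^ p + (a - b) ^ p) / 2 = a ^ p * (((1 + t) ^ p + (1 - t) ^ p) / 2) := by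
      rw [hab, hab', Real.mul_rpow ha.le h1t, Real.mul_rpow ha.le h2t]; ring
    rw [expand, Real.mul_rpow (Real.rpow_nonneg ha.le p) (by positivity),
      ← Real.rpow_mul ha.le, show p * (2 / p) = 2 by field_simp]
    have := stepB_core hp1 hp2 ht0 ht1
    have h2 : a ^ (2:ℝ) * (1 + (p - 1) * t ^ 2) ≤
        a ^ (2:ℝ) * (((1 + t) ^ p + (1 - t) ^ p) / 2) ^ (2 / p) := by
      apply mul_le_mul_of_nonneg_left this (Real.rpow_nonneg ha.le 2)
    calc a ^ 2 + (p - 1) * b ^ 2 = a ^ (2:ℝ) * (1 + (p - 1) * t ^ 2) := by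
          rw [Real.rpow_two, htdef]
          field_simp
    _ ≤ _ := h2

/-- Step B, full two-point dual inequality. -/
lemma stepB {p : ℝ} (hp1 : 1 ≤ p) (hp2 : p ≤ 2) (a b : ℝ) :
    a ^ 2 + (p - 1) * b ^ 2 ≤ ((|a + b| ^ p + |a - b| ^ p) / 2) ^ (2 / p) := by
  -- reduce to nonnegative a, b
  have key : ∀ x y : ℝ, 0 ≤ x → 0 ≤ y →
      x ^ 2 + (p - 1) * y ^ 2 ≤ (((x + y) ^ p + |x - y| ^ p) / 2) ^ (2 / p) := by
    intro x y hx hy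
    rcases le_total y x with hyx | hxy
    · rw [abs_of_nonneg (by linarith)]
      exact stepB0 hp1 hp2 hy hyx
    · rw [abs_of_nonpos (by linarith), neg_sub]
      have h1 := stepB0 hp1 hp2 hx hxy
      rw [show y + x = x + y by ring] at h1
      have hyx2 : x ^ 2 ≤ y ^ 2 := by nlinarith
      have h2 : x ^ 2 + (p - 1) * y ^ 2 ≤ y ^ 2 + (p - 1) * x ^ 2 := by
        nlinarith [mul_nonneg (by linarith : (0:ℝ) ≤ 2 - p) (by linarith : (0:ℝ) ≤ y ^ 2 - x ^ 2)]
      linarith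
  have habs : |a + b| ^ p + |a - b| ^ p = (|a| + |b|) ^ p + (|(|a| - |b|)|) ^ p := by
    rcases le_total 0 a with ha | ha <;> rcases le_total 0 b with hb | hb
    · rw [abs_of_nonneg ha, abs_of_nonneg hb, abs_of_nonneg (by linarith : (0:ℝ) ≤ a + b)]
    · rw [abs_of_nonneg ha, abs_of_nonpos hb,
        abs_of_nonneg (show (0:ℝ) ≤ a - b by linarith),
        show a + -b = a - b by ring, show a - -b = a + b by ring]
      ring
    · rw [abs_of_nonpos ha, abs_of_nonneg hb,
        abs_of_nonpos (show a - b ≤ (0:ℝ) by linarith),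
        show -a + b = -(a - b) by ring, show -a - b = -(a + b) by ring, abs_neg]
      ring
    · rw [abs_of_nonpos ha, abs_of_nonpos hb,
        abs_of_nonpos (show a + b ≤ (0:ℝ) by linarith),
        show -a + -b = -(a + b) by ring, show -a - -b = -(a - b) by ring, abs_neg]
  rw [habs]
  have := key |a| |b| (abs_nonneg a) (abs_nonneg b)
  calc a ^ 2 + (p - 1) * b ^ 2 = |a| ^ 2 + (p - 1) * |b| ^ 2 := by rw [sq_abs, sq_abs]
  _ ≤ _ := this

/-- Step C, primal two-point inequality for `q ≥ 2`. -/
lemma two_point {q : ℝ} (hq : 2 ≤ q) (a b : ℝ) :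
    (|a + b| ^ q + |a - b| ^ q) / 2 ≤ (a ^ 2 + (q - 1) * b ^ 2) ^ (q / 2) := by
  have hq1 : (0:ℝ) < q - 1 := by linarith
  have hq0 : (0:ℝ) < q := by linarith
  set p := q / (q - 1) with hpdef
  have hp1 : 1 ≤ p := by
    rw [hpdef, le_div_iff₀ hq1]; linarith
  have hp2 : p ≤ 2 := by
    rw [hpdef, div_le_iff₀ hq1]; linarith
  have hpm1 : p - 1 = 1 / (q - 1) := by
    rw [hpdef]; field_simp; ring
  have hqp : (q - 1) * p = q := by
    rw [hpdef]; field_simp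
  set u := a + b with hu
  set v := a - b with hv
  set Y : ℝ → ℝ := fun w => |w| ^ (q - 1) * (if w < 0 then -1 else 1) with hY
  have hmulY : ∀ w : ℝ, w * Y w = |w| ^ q := by
    intro w
    rcases lt_trichotomy w 0 with h | h | h
    · simp only [hY, if_pos h]
      rw [abs_of_neg h]
      rw [show w * ((-w) ^ (q-1) * (-1)) = (-w) * (-w) ^ (q-1) by ring]
      rw [← Real.rpow_one_add' (by linarith) (by intro hc; linarith), show 1 + (q-1) = q by ring]
    · simp [hY, h, Real.zero_rpow hq0.ne', Real.zero_rpow (by linarith : q - 1 ≠ 0)]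
    · simp only [hY, if_neg (not_lt.2 h.le)]
      rw [abs_of_pos h, mul_one, ← Real.rpow_one_add' h.le (by intro hc; linarith),
        show 1 + (q-1) = q by ring]
  have habsY : ∀ w : ℝ, |Y w| = |w| ^ (q - 1) := by
    intro w
    rcases lt_trichotomy w 0 with h | h | h
    · simp only [hY, if_pos h, mul_neg_one, abs_neg]
      exact abs_of_nonneg (Real.rpow_nonneg (abs_nonneg w) _)
    · simp [hY, h, Real.zero_rpow (by linarith : q - 1 ≠ 0)]
    · simp only [hY, if_neg (not_lt.2 h.le), mul_one]
      exact abs_of_nonneg (Real.rpow_nonneg (abs_nonneg w) _)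
  set c := (Y u + Y v) / 2 with hc
  set d := (Y u - Y v) / 2 with hd
  set M := (|u| ^ q + |v| ^ q) / 2 with hM
  have hMnn : 0 ≤ M := by
    have := Real.rpow_nonneg (abs_nonneg u) q
    have := Real.rpow_nonneg (abs_nonneg v) q
    rw [hM]; positivity
  have hE1 : a * c + b * d = M := by
    have h1 := hmulY u
    have h2 := hmulY v
    rw [hc, hd, hM, ← h1, ← h2, hu, hv]; ring
  have hCS : (a * c + b * d) ^ 2 ≤ (a ^ 2 + (q - 1) * b ^ 2) * (c ^ 2 + (p - 1) * d ^ 2) := by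
    rw [hpm1]
    have key : (a ^ 2 + (q-1) * b ^ 2) * (c ^ 2 + 1 / (q-1) * d ^ 2) - (a * c + b * d) ^ 2
        = (a * d - (q - 1) * b * c) ^ 2 / (q - 1) := by
      field_simp
      ring
    nlinarith [sq_nonneg (a * d - (q - 1) * b * c), div_nonneg (sq_nonneg (a * d - (q-1)*b*c)) hq1.le]
  have hB := stepB hp1 hp2 c d
  have hcd1 : c + d = Y u := by rw [hc, hd]; ring
  have hcd2 : c - d = Y v := by rw [hc, hd]; ring
  have habsYp : ∀ w : ℝ, |Y w| ^ p = |w| ^ q := by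
    intro w
    rw [habsY w, ← Real.rpow_mul (abs_nonneg w), hqp]
  rw [hcd1, hcd2, habsYp u, habsYp v] at hB
  set R := a ^ 2 + (q - 1) * b ^ 2 with hR
  have hRnn : 0 ≤ R := by rw [hR]; nlinarith [sq_nonneg a, sq_nonneg b]
  have hM2 : M ^ (2:ℝ) ≤ R * M ^ ((2:ℝ)/p) := by
    rw [Real.rpow_two]
    calc M ^ 2 = (a * c + b * d) ^ 2 := by rw [hE1]
    _ ≤ R * (c ^ 2 + (p - 1) * d ^ 2) := hCS
    _ ≤ R * M ^ ((2:ℝ)/p) := by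
        apply mul_le_mul_of_nonneg_left _ hRnn
        exact hB
  show M ≤ R ^ (q/2)
  rcases eq_or_lt_of_le hMnn with h0 | hMpos
  · rw [← h0]
    positivity
  · have hMp2 : (0:ℝ) < M ^ ((2:ℝ)/p) := Real.rpow_pos_of_pos hMpos _
    have h2q : (2:ℝ) - 2/p = 2/q := by
      rw [hpdef]
      field_simp
      ring
    have hkey : M ^ ((2:ℝ)/q) ≤ R := by
      rw [← h2q, Real.rpow_sub hMpos, div_le_iff₀ hMp2]
      exact hM2
    calc M = (M ^ ((2:ℝ)/q)) ^ (q/2) := by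
          rw [← Real.rpow_mul hMnn, show (2:ℝ)/q * (q/2) = 1 by field_simp, Real.rpow_one]
    _ ≤ R ^ (q/2) := Real.rpow_le_rpow (Real.rpow_nonneg hMnn _) hkey (by positivity)

def chr (b : Bool) : ℝ := if b then 1 else -1

lemma walsh_def {n : ℕ} (A : Finset (Fin n)) (x : Fin n → Bool) :
    walsh A x = ∏ j ∈ A, chr (x j) := rfl

lemma chr_mul_self (b : Bool) : chr b * chr b = 1 := by cases b <;> simp [chr]

/-- exchange of sum over the cube and product over coordinates -/
lemma sum_cube_prod {n : ℕ} (F : Fin n → Bool → ℝ) :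
    ∑ x : Fin n → Bool, ∏ j, F j (x j) = ∏ j, (F j true + F j false) := by
  have : ∀ j : Fin n, F j true + F j false = ∑ b : Bool, F j b := by
    intro j; rw [Fintype.sum_bool]
  simp_rw [this]
  rw [Finset.prod_univ_sum]
  rw [← Fintype.piFinset_univ]

/-- orthogonality of Walsh functions -/
lemma sum_walsh_mul_walsh {n : ℕ} (A B : Finset (Fin n)) :
    ∑ x : Fin n → Bool, walsh A x * walsh B x = if A = B then (2:ℝ) ^ n else 0 := by
  have hprod : ∀ x : Fin n → Bool, walsh A x * walsh B x =
      ∏ j, ((if j ∈ A then chr (x j) else 1) * (if j ∈ B then chr (x j) else 1)) := by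
    intro x
    rw [walsh_def, walsh_def, Finset.prod_mul_distrib]
    congr 1 <;> rw [← Finset.prod_filter] <;> congr 1 <;>
      simp [Finset.filter_mem_eq_inter]
  simp_rw [hprod]
  rw [sum_cube_prod fun j b => (if j ∈ A then chr b else 1) * (if j ∈ B then chr b else 1)]
  have hfact : ∀ j : Fin n,
      ((if j ∈ A then chr true else 1) * (if j ∈ B then chr true else 1) +
       (if j ∈ A then chr false else 1) * (if j ∈ B then chr false else 1)) =
      if ((j ∈ A) ↔ (j ∈ B)) then 2 else 0 := by
    intro j
    by_cases hA : j ∈ A <;> by_cases hB : j ∈ B <;> simp [hA, hB, chr] <;> norm_num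
  simp_rw [hfact]
  by_cases hAB : A = B
  · subst hAB
    simp only [iff_self, if_true]
    rw [Finset.prod_const]
    simp
  · rw [if_neg hAB]
    obtain ⟨j, hj⟩ : ∃ j, ¬((j ∈ A) ↔ (j ∈ B)) := by
      by_contra hc
      push_neg at hc
      exact hAB (Finset.ext fun j => (hc j))
    exact Finset.prod_eq_zero (Finset.mem_univ j) (by rw [if_neg hj])

/-- diagonal kernel: `∑_A W_A x W_A y = 2^n δ_{x,y}` -/
lemma sum_walsh_walsh {n : ℕ} (x y : Fin n → Bool) :
    ∑ A : Finset (Fin n), walsh A x * walsh A y = if x = y then (2:ℝ) ^ n else 0 := by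
  have h1 : ∀ A : Finset (Fin n), walsh A x * walsh A y = ∏ j ∈ A, (chr (x j) * chr (y j)) := by
    intro A; rw [walsh_def, walsh_def, Finset.prod_mul_distrib]
  simp_rw [h1]
  have h2 : ∑ A : Finset (Fin n), ∏ j ∈ A, (chr (x j) * chr (y j)) =
      ∏ j, (chr (x j) * chr (y j) + 1) := by
    rw [Finset.prod_add]
    rw [← Finset.powerset_univ]
    apply Finset.sum_congr rfl
    intro A _
    simp
  rw [h2]
  have h3 : ∀ j, chr (x j) * chr (y j) + 1 = if x j = y j then 2 else 0 := by
    intro j; cases hx : x j <;> cases hy : y j <;> simp [chr] <;> norm_num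
  simp_rw [h3]
  by_cases hxy : x = y
  · subst hxy
    simp only [if_true]
    rw [Finset.prod_const]
    simp
  · rw [if_neg hxy]
    obtain ⟨j, hj⟩ : ∃ j, x j ≠ y j := by
      by_contra hc
      push_neg at hc
      exact hxy (funext hc)
    exact Finset.prod_eq_zero (Finset.mem_univ j) (by rw [if_neg hj])

/-- Fourier inversion -/
lemma fourier_inversion {n : ℕ} (f : (Fin n → Bool) → ℝ) (x : Fin n → Bool) :
    ∑ A : Finset (Fin n), fourierCoef f A * walsh A x = f x := by
  have h2n : ((2:ℝ) ^ n) ≠ 0 := by positivity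
  simp only [fourierCoef, div_mul_eq_mul_div, Finset.sum_mul, ← Finset.sum_div]
  rw [div_eq_iff h2n]
  rw [Finset.sum_comm]
  have : ∀ y : Fin n → Bool, ∑ A : Finset (Fin n), f y * walsh A y * walsh A x =
      f y * (if y = x then (2:ℝ)^n else 0) := by
    intro y
    rw [← sum_walsh_walsh y x, Finset.mul_sum]
    simp [mul_assoc]
  simp_rw [this, mul_ite, mul_zero]
  rw [Finset.sum_ite_eq' Finset.univ x (fun y => f y * (2:ℝ)^n)]
  simp [mul_comm]

/-- coefficient extraction for explicit Walsh combinations -/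
lemma fourierCoef_comb {n : ℕ} (c : Finset (Fin n) → ℝ) (B : Finset (Fin n)) :
    fourierCoef (fun x => ∑ A : Finset (Fin n), c A * walsh A x) B = c B := by
  have h2n : ((2:ℝ) ^ n) ≠ 0 := by positivity
  simp only [fourierCoef]
  rw [div_eq_iff h2n]
  simp only [Finset.sum_mul, mul_assoc]
  rw [Finset.sum_comm]
  have : ∀ A : Finset (Fin n), ∑ x : Fin n → Bool, c A * (walsh A x * walsh B x) =
      c A * (if A = B then (2:ℝ)^n else 0) := by
    intro A
    rw [← Finset.mul_sum, sum_walsh_mul_walsh]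
  simp_rw [this, mul_ite, mul_zero]
  rw [Finset.sum_ite_eq' Finset.univ B (fun A => c A * (2:ℝ)^n)]
  simp [mul_comm]

/-- Parseval -/
lemma parseval {n : ℕ} (f : (Fin n → Bool) → ℝ) :
    ∑ A : Finset (Fin n), (fourierCoef f A) ^ 2 = (∑ x : Fin n → Bool, (f x) ^ 2) / 2 ^ n := by
  have h2n : ((2:ℝ) ^ n) ≠ 0 := by positivity
  rw [eq_div_iff h2n]
  have : ∀ A : Finset (Fin n), (fourierCoef f A) ^ 2 * (2:ℝ)^n =
      fourierCoef f A * ∑ x : Fin n → Bool, f x * walsh A x := by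
    intro A
    rw [sq]
    rw [mul_assoc]
    congr 1
    rw [fourierCoef, div_mul_cancel₀ _ h2n]
  rw [Finset.sum_mul]
  simp_rw [this]
  simp_rw [Finset.mul_sum]
  rw [Finset.sum_comm]
  have h4 : ∀ x : Fin n → Bool, ∑ A : Finset (Fin n), fourierCoef f A * (f x * walsh A x) =
      f x * f x := by
    intro x
    have : ∀ A : Finset (Fin n), fourierCoef f A * (f x * walsh A x) =
        f x * (fourierCoef f A * walsh A x) := by intro A; ring
    simp_rw [this]
    rw [← Finset.mul_sum, fourier_inversion]
  simp_rw [h4]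
  apply Finset.sum_congr rfl
  intro x _
  ring

noncomputable def noiseOp {n : ℕ} (ρ : ℝ) (f : (Fin n → Bool) → ℝ) : (Fin n → Bool) → ℝ :=
  fun x => (∑ y : Fin n → Bool, f y * ∏ j, (1 + ρ * (chr (x j) * chr (y j)))) / 2 ^ n

lemma kernel_expand {n : ℕ} (ρ : ℝ) (x y : Fin n → Bool) :
    ∏ j, (1 + ρ * (chr (x j) * chr (y j))) =
      ∑ A : Finset (Fin n), ρ ^ A.card * (walsh A x * walsh A y) := by
  have h0 : ∀ j : Fin n, (1 + ρ * (chr (x j) * chr (y j))) =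
      (ρ * (chr (x j) * chr (y j)) + 1) := fun j => add_comm _ _
  simp_rw [h0]
  rw [Finset.prod_add]
  rw [← Finset.powerset_univ]
  apply Finset.sum_congr rfl
  intro A _
  rw [Finset.prod_mul_distrib, Finset.prod_const, Finset.prod_const_one, mul_one]
  congr 1
  rw [walsh_def, walsh_def, ← Finset.prod_mul_distrib]

lemma noiseOp_spectral {n : ℕ} (ρ : ℝ) (f : (Fin n → Bool) → ℝ) (x : Fin n → Bool) :
    noiseOp ρ f x = ∑ A : Finset (Fin n), ρ ^ A.card * fourierCoef f A * walsh A x := by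
  have h2n : ((2:ℝ) ^ n) ≠ 0 := by positivity
  unfold noiseOp
  simp_rw [kernel_expand, Finset.mul_sum]
  rw [Finset.sum_comm, Finset.sum_div]
  apply Finset.sum_congr rfl
  intro A _
  rw [fourierCoef, ← mul_div_assoc, div_mul_eq_mul_div]
  congr 1
  rw [Finset.mul_sum, Finset.sum_mul]
  apply Finset.sum_congr rfl
  intro y _
  ring

lemma noiseOp_comb {n : ℕ} (ρ : ℝ) (c : Finset (Fin n) → ℝ) (x : Fin n → Bool) :
    noiseOp ρ (fun z => ∑ A : Finset (Fin n), c A * walsh A z) x =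
      ∑ A : Finset (Fin n), ρ ^ A.card * c A * walsh A x := by
  rw [noiseOp_spectral]
  apply Finset.sum_congr rfl
  intro A _
  rw [fourierCoef_comb]

lemma sum_cube_succ {n : ℕ} (F : (Fin (n+1) → Bool) → ℝ) :
    ∑ x : Fin (n+1) → Bool, F x
      = ∑ x' : Fin n → Bool, (F (Fin.cons true x') + F (Fin.cons false x')) := by
  rw [← Equiv.sum_comp (Fin.consEquiv fun _ => Bool) F]
  rw [Fintype.sum_prod_type, Fintype.sum_bool, ← Finset.sum_add_distrib]
  rfl

lemma noiseOp_cons {n : ℕ} (ρ : ℝ) (f : (Fin (n+1) → Bool) → ℝ) (b : Bool) (x' : Fin n → Bool) :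
    noiseOp ρ f (Fin.cons b x') =
      noiseOp ρ (fun y' => (f (Fin.cons true y') + f (Fin.cons false y'))/2) x'
      + ρ * chr b * noiseOp ρ (fun y' => (f (Fin.cons true y') - f (Fin.cons false y'))/2) x' := by
  unfold noiseOp
  rw [sum_cube_succ]
  have hker : ∀ (c : Bool) (y' : Fin n → Bool),
      ∏ j : Fin (n+1), (1 + ρ * (chr ((Fin.cons b x' : Fin (n+1) → Bool) j) * chr ((Fin.cons c y' : Fin (n+1) → Bool) j)))
      = (1 + ρ * (chr b * chr c)) * ∏ j : Fin n, (1 + ρ * (chr (x' j) * chr (y' j))) := by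
    intro c y'
    rw [Fin.prod_univ_succ]
    simp [Fin.cons_zero, Fin.cons_succ]
  simp_rw [hker]
  have halg : ∀ y' : Fin n → Bool,
      f (Fin.cons true y') * ((1 + ρ * (chr b * chr true)) *
          ∏ j : Fin n, (1 + ρ * (chr (x' j) * chr (y' j))))
      + f (Fin.cons false y') * ((1 + ρ * (chr b * chr false)) *
          ∏ j : Fin n, (1 + ρ * (chr (x' j) * chr (y' j))))
      = 2 * (((f (Fin.cons true y') + f (Fin.cons false y'))/2) *
          ∏ j : Fin n, (1 + ρ * (chr (x' j) * chr (y' j))))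
        + (2 * (ρ * chr b)) * (((f (Fin.cons true y') - f (Fin.cons false y'))/2) *
          ∏ j : Fin n, (1 + ρ * (chr (x' j) * chr (y' j)))) := by
    intro y'
    cases b <;> simp [chr] <;> ring
  simp_rw [halg]
  rw [Finset.sum_add_distrib, ← Finset.mul_sum, ← Finset.mul_sum]
  have h2n : ((2:ℝ) ^ n) ≠ 0 := by positivity
  rw [show ((2:ℝ) ^ (n+1)) = 2 ^ n * 2 by ring]
  field_simp

noncomputable def msum {n : ℕ} (q : ℝ) (f : (Fin n → Bool) → ℝ) : ℝ :=
  (∑ x : Fin n → Bool, |f x| ^ q) / 2 ^ n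

lemma pnorm_eq_msum {n : ℕ} (q : ℝ) (f : (Fin n → Bool) → ℝ) :
    pnorm q f = (msum q f) ^ (1/q) := rfl

lemma msum_nonneg {n : ℕ} (q : ℝ) (f : (Fin n → Bool) → ℝ) : 0 ≤ msum q f := by
  unfold msum
  apply div_nonneg _ (by positivity)
  exact Finset.sum_nonneg fun x _ => Real.rpow_nonneg (abs_nonneg _) _

lemma pnorm_nonneg {n : ℕ} (q : ℝ) (f : (Fin n → Bool) → ℝ) : 0 ≤ pnorm q f :=
  Real.rpow_nonneg (msum_nonneg q f) _

lemma msum_two {n : ℕ} (f : (Fin n → Bool) → ℝ) :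
    msum (2:ℝ) f = (∑ x : Fin n → Bool, f x ^ 2) / 2 ^ n := by
  unfold msum
  congr 1
  apply Finset.sum_congr rfl
  intro x _
  rw [Real.rpow_two, sq_abs]

lemma card_cube (n : ℕ) : (Fintype.card (Fin n → Bool)) = 2 ^ n := by
  simp [Fintype.card_fun]

/-- energy identity across a coordinate split -/
lemma msum_two_cons {n : ℕ} (f : (Fin (n+1) → Bool) → ℝ) :
    msum 2 f = msum 2 (fun y' => (f (Fin.cons true y') + f (Fin.cons false y'))/2)
      + msum 2 (fun y' => (f (Fin.cons true y') - f (Fin.cons false y'))/2) := by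
  rw [msum_two, msum_two, msum_two]
  rw [sum_cube_succ]
  rw [← add_div, ← Finset.sum_add_distrib]
  have hpt : ∀ y' : Fin n → Bool,
      ((f (Fin.cons true y') + f (Fin.cons false y'))/2) ^ 2 +
        ((f (Fin.cons true y') - f (Fin.cons false y'))/2) ^ 2
      = (f (Fin.cons true y') ^ 2 + f (Fin.cons false y') ^ 2) / 2 := by
    intro y'; ring
  simp_rw [hpt]
  rw [← Finset.sum_div, div_div, show (2:ℝ) * 2^n = 2^(n+1) by ring]

lemma pnorm_smul {n : ℕ} {q : ℝ} (hq : 0 < q) (c : ℝ) (u : (Fin n → Bool) → ℝ) :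
    pnorm q (fun x => c * u x) = |c| * pnorm q u := by
  unfold pnorm
  have h1 : ∀ x : Fin n → Bool, |c * u x| ^ q = |c| ^ q * |u x| ^ q := by
    intro x
    rw [abs_mul, Real.mul_rpow (abs_nonneg _) (abs_nonneg _)]
  simp_rw [h1]
  rw [← Finset.mul_sum, mul_div_assoc,
    Real.mul_rpow (Real.rpow_nonneg (abs_nonneg _) _) (by
      apply div_nonneg _ (by positivity)
      exact Finset.sum_nonneg fun x _ => Real.rpow_nonneg (abs_nonneg _) _),
    ← Real.rpow_mul (abs_nonneg c), mul_one_div, div_self hq.ne', Real.rpow_one]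

lemma pnorm_zero {n : ℕ} {q : ℝ} (hq : 0 < q) :
    pnorm q (fun _ : Fin n → Bool => (0:ℝ)) = 0 := by
  unfold pnorm
  simp [Real.zero_rpow hq.ne']
  rw [Real.zero_rpow]
  positivity

lemma pnorm_add_le {n : ℕ} {q : ℝ} (hq : 1 ≤ q) (u v : (Fin n → Bool) → ℝ) :
    pnorm q (fun x => u x + v x) ≤ pnorm q u + pnorm q v := by
  have hq0 : 0 < q := lt_of_lt_of_le one_pos hq
  have key : (∑ x : Fin n → Bool, |u x + v x| ^ q) ^ (1/q) ≤
      (∑ x : Fin n → Bool, |u x| ^ q) ^ (1/q) + (∑ x : Fin n → Bool, |v x| ^ q) ^ (1/q) :=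
    Real.Lp_add_le Finset.univ u v hq
  have h2n : (0:ℝ) < ((2:ℝ) ^ n) ^ (1/q) := by positivity
  have expand : ∀ w : (Fin n → Bool) → ℝ,
      pnorm q w = (∑ x : Fin n → Bool, |w x| ^ q) ^ (1/q) / ((2:ℝ) ^ n) ^ (1/q) := by
    intro w
    unfold pnorm
    rw [Real.div_rpow (Finset.sum_nonneg fun x _ => Real.rpow_nonneg (abs_nonneg _) _)
      (by positivity)]
  rw [expand, expand, expand, ← add_div]
  gcongr

lemma msum_mono {n : ℕ} {q : ℝ} (hq : 2 ≤ q) (f : (Fin n → Bool) → ℝ) :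
    (msum 2 f) ^ (q/2) ≤ msum q f := by
  have hq0 : (0:ℝ) < q := by linarith
  have key := Real.rpow_arith_mean_le_arith_mean_rpow Finset.univ
    (fun _ : Fin n → Bool => ((2:ℝ) ^ n)⁻¹) (fun x => |f x| ^ (2:ℝ))
    (fun i _ => by positivity)
    (by
      rw [Finset.sum_const, Finset.card_univ, card_cube, nsmul_eq_mul]
      push_cast
      rw [mul_inv_cancel₀ (by positivity)])
    (fun i _ => Real.rpow_nonneg (abs_nonneg _) _)
    (p := q/2) (by linarith)
  have h1 : (∑ x : Fin n → Bool, ((2:ℝ)^n)⁻¹ * |f x| ^ (2:ℝ)) = msum 2 f := by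
    rw [← Finset.mul_sum]
    unfold msum
    rw [inv_mul_eq_div]
  have h2 : (∑ x : Fin n → Bool, ((2:ℝ)^n)⁻¹ * (|f x| ^ (2:ℝ)) ^ (q/2)) = msum q f := by
    rw [← Finset.mul_sum]
    unfold msum
    rw [inv_mul_eq_div]
    congr 1
    apply Finset.sum_congr rfl
    intro x _
    rw [← Real.rpow_mul (abs_nonneg _), show (2:ℝ) * (q/2) = q by field_simp]
  rw [h1, h2] at key
  exact key

lemma pnorm_two_le {n : ℕ} {q : ℝ} (hq : 2 ≤ q) (f : (Fin n → Bool) → ℝ) :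
    pnorm 2 f ≤ pnorm q f := by
  have hq0 : (0:ℝ) < q := by linarith
  rw [pnorm_eq_msum, pnorm_eq_msum]
  have key := msum_mono hq f
  have h1 : ((msum 2 f) ^ (q/2)) ^ (1/q) ≤ (msum q f) ^ (1/q) :=
    Real.rpow_le_rpow (Real.rpow_nonneg (msum_nonneg _ _) _) key (by positivity)
  rwa [← Real.rpow_mul (msum_nonneg _ _), show q/2 * (1/q) = 1/2 by field_simp] at h1

/-- **Hypercontractivity** `(2 → q)` on the discrete cube. -/
lemma hyper {q : ℝ} (hq : 2 ≤ q) :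
    ∀ (n : ℕ) (f : (Fin n → Bool) → ℝ),
      msum q (noiseOp (Real.sqrt (q-1))⁻¹ f) ≤ (msum 2 f) ^ (q/2) := by
  have hq0 : (0:ℝ) < q := by linarith
  have hq1 : (0:ℝ) < q - 1 := by linarith
  have hsq : (0:ℝ) < Real.sqrt (q-1) := Real.sqrt_pos.2 hq1
  set ρ : ℝ := (Real.sqrt (q-1))⁻¹ with hρ
  have hρsq : (q - 1) * ρ ^ 2 = 1 := by
    rw [hρ, inv_pow, Real.sq_sqrt hq1.le, mul_inv_cancel₀ hq1.ne']
  intro n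
  induction n with
  | zero =>
    intro f
    have huniq : ∀ x : Fin 0 → Bool, x = (fun i => i.elim0) := by
      intro x; funext i; exact i.elim0
    have hsum : ∀ g : (Fin 0 → Bool) → ℝ, (∑ y : Fin 0 → Bool, g y) = g (fun i => i.elim0) := by
      intro g
      rw [Fintype.sum_eq_single (fun i : Fin 0 => i.elim0)]
      intro y hy
      exact absurd (huniq y) hy
    have hnoise : noiseOp ρ f (fun i => i.elim0) = f (fun i => i.elim0) := by
      unfold noiseOp
      rw [hsum (fun y => f y * ∏ j : Fin 0, (1 + ρ * (chr ((fun i : Fin 0 => i.elim0) j) * chr (y j))))]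
      simp
    have e1 : msum q (noiseOp ρ f) = |f (fun i => i.elim0)| ^ q := by
      unfold msum
      rw [hsum (fun x => |noiseOp ρ f x| ^ q), hnoise]
      simp
    have e2 : msum 2 f = |f (fun i => i.elim0)| ^ (2:ℝ) := by
      unfold msum
      rw [hsum (fun x => |f x| ^ (2:ℝ))]
      simp
    rw [e1, e2, ← Real.rpow_mul (abs_nonneg _), show (2:ℝ) * (q/2) = q by field_simp]
  | succ n ih =>
    intro f
    set g : (Fin n → Bool) → ℝ := fun y' => (f (Fin.cons true y') + f (Fin.cons false y'))/2 with hg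
    set d : (Fin n → Bool) → ℝ := fun y' => (f (Fin.cons true y') - f (Fin.cons false y'))/2 with hd
    set A : (Fin n → Bool) → ℝ := noiseOp ρ g with hA
    set B : (Fin n → Bool) → ℝ := noiseOp ρ d with hB
    set r : ℝ := q/2 with hr
    have hr1 : 1 ≤ r := by rw [hr]; linarith
    have hr0 : (0:ℝ) < r := by linarith
    -- step 1: expand and apply the two-point inequality
    have step1 : msum q (noiseOp ρ f) ≤
        (∑ x' : Fin n → Bool, (A x' ^ 2 + B x' ^ 2) ^ r) / 2 ^ n := by
      unfold msum
      rw [sum_cube_succ]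
      have hcons : ∀ (b : Bool) (x' : Fin n → Bool),
          noiseOp ρ f (Fin.cons b x') = A x' + ρ * chr b * B x' := by
        intro b x'
        rw [noiseOp_cons]
      have hpt : ∀ x' : Fin n → Bool,
          |noiseOp ρ f (Fin.cons true x')| ^ q + |noiseOp ρ f (Fin.cons false x')| ^ q ≤
            2 * (A x' ^ 2 + B x' ^ 2) ^ r := by
        intro x'
        rw [hcons true x', hcons false x']
        have htp := two_point hq (A x') (ρ * B x')
        have he : A x' ^ 2 + (q - 1) * (ρ * B x') ^ 2 = A x' ^ 2 + B x' ^ 2 := by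
          rw [mul_pow]
          nlinarith [hρsq]
        rw [he] at htp
        have h1 : A x' + ρ * chr true * B x' = A x' + ρ * B x' := by simp [chr]
        have h2 : A x' + ρ * chr false * B x' = A x' - ρ * B x' := by simp [chr]; ring
        rw [h1, h2]
        rw [hr]
        linarith [htp]
      calc (∑ x' : Fin n → Bool,
            (|noiseOp ρ f (Fin.cons true x')| ^ q + |noiseOp ρ f (Fin.cons false x')| ^ q)) / 2 ^ (n+1)
          ≤ (∑ x' : Fin n → Bool, 2 * (A x' ^ 2 + B x' ^ 2) ^ r) / 2 ^ (n+1) := by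
            gcongr with x' hx'
            exact hpt x'
      _ = (∑ x' : Fin n → Bool, (A x' ^ 2 + B x' ^ 2) ^ r) / 2 ^ n := by
            rw [← Finset.mul_sum, show ((2:ℝ) ^ (n+1)) = 2 * 2 ^ n by ring]
            rw [mul_div_mul_left _ _ (two_ne_zero)]
    -- step 2: Minkowski in L_r
    have habs2 : ∀ (u : (Fin n → Bool) → ℝ) (x' : Fin n → Bool),
        (u x' ^ 2) ^ r = |u x'| ^ q := by
      intro u x'
      rw [← sq_abs, ← Real.rpow_two, ← Real.rpow_mul (abs_nonneg _),
        show (2:ℝ) * r = q by rw [hr]; field_simp]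
    have step2 : ((∑ x' : Fin n → Bool, (A x' ^ 2 + B x' ^ 2) ^ r) / 2 ^ n) ^ (1/r) ≤
        msum 2 g + msum 2 d := by
      have mink := Real.Lp_add_le_of_nonneg (p := r) Finset.univ
        (f := fun x' => A x' ^ 2) (g := fun x' => B x' ^ 2) hr1
        (fun i _ => sq_nonneg _) (fun i _ => sq_nonneg _)
      simp_rw [habs2 A, habs2 B] at mink
      -- mink : (∑ (A²+B²)^r)^(1/r) ≤ (∑ |A|^q)^(1/r) + (∑ |B|^q)^(1/r)
      have hSA : (∑ x' : Fin n → Bool, |A x'| ^ q) = msum q A * 2 ^ n := by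
        unfold msum; field_simp
      have hSB : (∑ x' : Fin n → Bool, |B x'| ^ q) = msum q B * 2 ^ n := by
        unfold msum; field_simp
      rw [hSA, hSB] at mink
      have hq2n : (0:ℝ) ≤ ((2:ℝ) ^ n) ^ (1/r) := by positivity
      have bA : (msum q A * 2 ^ n) ^ (1/r) ≤ msum 2 g * ((2:ℝ) ^ n) ^ (1/r) := by
        rw [Real.mul_rpow (msum_nonneg _ _) (by positivity)]
        apply mul_le_mul_of_nonneg_right _ hq2n
        calc (msum q A) ^ (1/r) ≤ ((msum 2 g) ^ r) ^ (1/r) :=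
              Real.rpow_le_rpow (msum_nonneg _ _) (ih g) (by positivity)
        _ = msum 2 g := by
              rw [← Real.rpow_mul (msum_nonneg _ _), mul_one_div, div_self hr0.ne',
                Real.rpow_one]
      have bB : (msum q B * 2 ^ n) ^ (1/r) ≤ msum 2 d * ((2:ℝ) ^ n) ^ (1/r) := by
        rw [Real.mul_rpow (msum_nonneg _ _) (by positivity)]
        apply mul_le_mul_of_nonneg_right _ hq2n
        calc (msum q B) ^ (1/r) ≤ ((msum 2 d) ^ r) ^ (1/r) :=
              Real.rpow_le_rpow (msum_nonneg _ _) (ih d) (by positivity)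
        _ = msum 2 d := by
              rw [← Real.rpow_mul (msum_nonneg _ _), mul_one_div, div_self hr0.ne',
                Real.rpow_one]
      have hT0 : (0:ℝ) ≤ ∑ x' : Fin n → Bool, (A x' ^ 2 + B x' ^ 2) ^ r :=
        Finset.sum_nonneg fun x _ => Real.rpow_nonneg (by positivity) _
      have combined : (∑ x' : Fin n → Bool, (A x' ^ 2 + B x' ^ 2) ^ r) ^ (1/r) ≤
          (msum 2 g + msum 2 d) * ((2:ℝ) ^ n) ^ (1/r) := by
        calc (∑ x' : Fin n → Bool, (A x' ^ 2 + B x' ^ 2) ^ r) ^ (1/r)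
            ≤ (msum q A * 2 ^ n) ^ (1/r) + (msum q B * 2 ^ n) ^ (1/r) := mink
        _ ≤ msum 2 g * ((2:ℝ) ^ n) ^ (1/r) + msum 2 d * ((2:ℝ) ^ n) ^ (1/r) :=
              add_le_add bA bB
        _ = (msum 2 g + msum 2 d) * ((2:ℝ) ^ n) ^ (1/r) := by ring
      rw [Real.div_rpow hT0 (by positivity)]
      rw [div_le_iff₀ (by positivity : (0:ℝ) < ((2:ℝ)^n) ^ (1/r))]
      exact combined
    -- step 3: combine
    have henergy : msum 2 g + msum 2 d = msum 2 f := (msum_two_cons f).symm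
    rw [henergy] at step2
    have hD0 : (0:ℝ) ≤ (∑ x' : Fin n → Bool, (A x' ^ 2 + B x' ^ 2) ^ r) / 2 ^ n := by
      apply div_nonneg _ (by positivity)
      exact Finset.sum_nonneg fun x _ => Real.rpow_nonneg (by positivity) _
    have step3 : (∑ x' : Fin n → Bool, (A x' ^ 2 + B x' ^ 2) ^ r) / 2 ^ n ≤ (msum 2 f) ^ r := by
      have := Real.rpow_le_rpow (Real.rpow_nonneg hD0 _) step2 hr0.le
      rwa [← Real.rpow_mul hD0, one_div_mul_cancel hr0.ne', Real.rpow_one] at this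
    calc msum q (noiseOp ρ f) ≤ _ := step1
    _ ≤ (msum 2 f) ^ r := step3

/-- pnorm version of hypercontractivity. -/
lemma hyper_pnorm {q : ℝ} (hq : 2 ≤ q) {n : ℕ} (f : (Fin n → Bool) → ℝ) :
    pnorm q (noiseOp (Real.sqrt (q-1))⁻¹ f) ≤ pnorm 2 f := by
  have hq0 : (0:ℝ) < q := by linarith
  rw [pnorm_eq_msum, pnorm_eq_msum]
  calc (msum q (noiseOp (Real.sqrt (q-1))⁻¹ f)) ^ (1/q)
      ≤ ((msum 2 f) ^ (q/2)) ^ (1/q) :=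
        Real.rpow_le_rpow (msum_nonneg _ _) (hyper hq n f) (by positivity)
  _ = (msum 2 f) ^ ((1:ℝ)/2) := by
        have hexp : q/2 * (1/q) = (1:ℝ)/2 := by
          field_simp
        rw [← Real.rpow_mul (msum_nonneg _ _), hexp]

lemma sum_walsh {n : ℕ} (A : Finset (Fin n)) :
    ∑ x : Fin n → Bool, walsh A x = if A = ∅ then (2:ℝ)^n else 0 := by
  have h := sum_walsh_mul_walsh A (∅ : Finset (Fin n))
  have hw : ∀ x : Fin n → Bool, walsh (∅ : Finset (Fin n)) x = 1 := by
    intro x; simp [walsh]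
  simp_rw [hw, mul_one] at h
  exact h

lemma msum_two_comb {n : ℕ} (c : Finset (Fin n) → ℝ) :
    msum 2 (fun x => ∑ A : Finset (Fin n), c A * walsh A x) = ∑ A : Finset (Fin n), (c A)^2 := by
  rw [msum_two, ← parseval]
  apply Finset.sum_congr rfl
  intro A _
  rw [fourierCoef_comb]

lemma pnorm_sum_le {n : ℕ} {q : ℝ} (hq : 1 ≤ q) (m : ℕ) (u : ℕ → (Fin n → Bool) → ℝ) :
    pnorm q (fun x => ∑ k ∈ Finset.range m, u k x) ≤ ∑ k ∈ Finset.range m, pnorm q (u k) := by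
  have hq0 : (0:ℝ) < q := lt_of_lt_of_le one_pos hq
  induction m with
  | zero =>
    simp only [Finset.range_zero, Finset.sum_empty]
    exact le_of_eq (pnorm_zero hq0)
  | succ m ih =>
    simp only [Finset.sum_range_succ]
    calc pnorm q (fun x => (∑ k ∈ Finset.range m, u k x) + u m x)
        ≤ pnorm q (fun x => ∑ k ∈ Finset.range m, u k x) + pnorm q (u m) :=
          pnorm_add_le hq _ _
    _ ≤ (∑ k ∈ Finset.range m, pnorm q (u k)) + pnorm q (u m) := by
          exact add_le_add_left ih _

lemma level_bound {n : ℕ} {q : ℝ} (hq : 2 ≤ q) (c0 : Finset (Fin n) → ℝ) (k : ℕ) :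
    pnorm q (fun x => ∑ A ∈ Finset.univ.filter (fun A : Finset (Fin n) => A.card = k),
        c0 A * walsh A x)
      ≤ Real.sqrt (q-1) ^ k * pnorm 2 (fun x =>
        ∑ A ∈ Finset.univ.filter (fun A : Finset (Fin n) => A.card = k), c0 A * walsh A x) := by
  have hq1 : (0:ℝ) < q - 1 := by linarith
  have hsq : (0:ℝ) < Real.sqrt (q-1) := Real.sqrt_pos.2 hq1
  have hsq1 : (1:ℝ) ≤ Real.sqrt (q-1) := by
    nlinarith [Real.sq_sqrt hq1.le, Real.sqrt_nonneg (q-1)]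
  set ρ : ℝ := (Real.sqrt (q-1))⁻¹ with hρ
  set S := Finset.univ.filter (fun A : Finset (Fin n) => A.card = k) with hS
  set G : (Fin n → Bool) → ℝ := fun x => ∑ A ∈ S, c0 A * walsh A x with hG
  set cF : Finset (Fin n) → ℝ := fun A => if A ∈ S then Real.sqrt (q-1) ^ k * c0 A else 0 with hcF
  have hF : ∀ x, noiseOp ρ (fun z => ∑ A : Finset (Fin n), cF A * walsh A z) x = G x := by
    intro x
    rw [noiseOp_comb]
    simp only [hG]
    rw [show (∑ A ∈ S, c0 A * walsh A x) = ∑ A : Finset (Fin n),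
        (if A ∈ S then c0 A * walsh A x else 0) by
      rw [Finset.sum_ite_mem, Finset.univ_inter]]
    apply Finset.sum_congr rfl
    intro A _
    by_cases hA : A ∈ S
    · rw [hcF]
      simp only [hA, if_pos]
      have hcard : A.card = k := (Finset.mem_filter.1 hA).2
      rw [hcard, hρ]
      rw [show (Real.sqrt (q-1))⁻¹ ^ k * (Real.sqrt (q-1) ^ k * c0 A) * walsh A x
          = ((Real.sqrt (q-1))⁻¹ ^ k * Real.sqrt (q-1) ^ k) * (c0 A * walsh A x) by ring]
      rw [← mul_pow, inv_mul_cancel₀ hsq.ne', one_pow, one_mul]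
    · rw [hcF]
      simp [hA]
  have hFsmul : (fun z => ∑ A : Finset (Fin n), cF A * walsh A z)
      = fun z => Real.sqrt (q-1) ^ k * G z := by
    funext z
    rw [hG, Finset.mul_sum]
    rw [show (∑ A ∈ S, Real.sqrt (q-1) ^ k * (c0 A * walsh A z)) = ∑ A : Finset (Fin n),
        (if A ∈ S then Real.sqrt (q-1) ^ k * (c0 A * walsh A z) else 0) by
      rw [Finset.sum_ite_mem, Finset.univ_inter]]
    apply Finset.sum_congr rfl
    intro A _
    rw [hcF]
    by_cases hA : A ∈ S <;> simp [hA] <;> ring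
  have hmain := hyper_pnorm hq (n := n) (fun z => ∑ A : Finset (Fin n), cF A * walsh A z)
  rw [show noiseOp (Real.sqrt (q-1))⁻¹ (fun z => ∑ A : Finset (Fin n), cF A * walsh A z) = G
    from funext hF] at hmain
  rw [hFsmul] at hmain
  rw [pnorm_smul (by norm_num : (0:ℝ) < 2)] at hmain
  rw [abs_of_nonneg (by positivity : (0:ℝ) ≤ Real.sqrt (q-1) ^ k)] at hmain
  exact hmain

lemma geom_aux {x : ℝ} (hx0 : 0 ≤ x) (hx1 : x < 1) (n : ℕ) :
    ∑ k ∈ Finset.range n, x ^ (k+1) ≤ x / (1-x) := by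
  have h1x : (0:ℝ) < 1 - x := by linarith
  have hgs : ∑ k ∈ Finset.range n, x ^ k ≤ 1 / (1-x) := by
    rcases eq_or_lt_of_le hx0 with h0 | h0
    · rw [← h0]
      have h1 : ∑ k ∈ Finset.range n, (0:ℝ) ^ k ≤ 1 := by
        rcases n with _ | m
        · simp
        · rw [Finset.sum_range_succ']
          simp
      calc ∑ k ∈ Finset.range n, (0:ℝ) ^ k ≤ 1 := h1
      _ ≤ 1 / (1 - 0) := by norm_num
    · have hne1 : x - 1 ≠ 0 := by linarith
      have hne2 : (1:ℝ) - x ≠ 0 := by linarith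
      rw [geom_sum_eq hx1.ne n]
      have he : (x^n - 1)/(x-1) = (1 - x^n)/(1-x) := by
        field_simp
        ring
      rw [he]
      gcongr
      nlinarith [pow_nonneg hx0 n]
  have : ∑ k ∈ Finset.range n, x ^ (k+1) = x * ∑ k ∈ Finset.range n, x ^ k := by
    rw [Finset.mul_sum]
    apply Finset.sum_congr rfl
    intro k _
    ring
  rw [this, div_eq_mul_one_div]
  exact mul_le_mul_of_nonneg_left hgs hx0

end HCaux

open HCaux

/-- **Inequality (3.14)**: there is a universal `C > 0` such that for every `p ∈ [2,∞)` and
every `s ∈ (0,∞)` with `e^s > √p`, for every `n ∈ ℕ` and every `h : {-1,1}^n → ℝ`,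
`‖e^{-sΔ_{[n]}}(h - Rad_0 h)‖_p ≤ C √p/(e^s - √p) ‖h‖_p`. -/
theorem heatSemigroup_meanZero_opNorm :
    ∃ C : ℝ, 0 < C ∧ ∀ p : ℝ, 2 ≤ p → ∀ s : ℝ, 0 < s → Real.sqrt p < Real.exp s →
      ∀ n : ℕ, ∀ h : (Fin n → Bool) → ℝ,
      pnorm p (heatSemigroup s (fun ε => h ε - fourierCoef h (∅ : Finset (Fin n)))) ≤
        C * Real.sqrt p / (Real.exp s - Real.sqrt p) * pnorm p h := by
  refine ⟨1, one_pos, ?_⟩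
  intro p hp s hs hsp n h
  have hp0 : (0:ℝ) < p := by linarith
  have hes : (0:ℝ) < Real.exp s := Real.exp_pos s
  have hsqp : (0:ℝ) < Real.sqrt p := Real.sqrt_pos.2 (by linarith)
  have hdiff : (0:ℝ) < Real.exp s - Real.sqrt p := by linarith
  have h2n : ((2:ℝ)^n) ≠ 0 := by positivity
  set c0 : Finset (Fin n) → ℝ := fun A => if A = ∅ then 0 else fourierCoef h A with hc0def
  set G : ℕ → (Fin n → Bool) → ℝ := fun k x =>
    ∑ A ∈ Finset.univ.filter (fun A : Finset (Fin n) => A.card = k), c0 A * walsh A x with hGdef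
  have hcoef : ∀ A : Finset (Fin n), fourierCoef (fun ε => h ε - fourierCoef h ∅) A = c0 A := by
    intro A
    have expand : (∑ ε : Fin n → Bool, (h ε - fourierCoef h ∅) * walsh A ε)
        = (∑ ε : Fin n → Bool, h ε * walsh A ε)
          - fourierCoef h ∅ * ∑ ε : Fin n → Bool, walsh A ε := by
      rw [Finset.mul_sum, ← Finset.sum_sub_distrib]
      apply Finset.sum_congr rfl
      intro ε _
      ring
    show (∑ ε : Fin n → Bool, (h ε - fourierCoef h ∅) * walsh A ε) / 2^n = c0 A
    rw [expand, HCaux.sum_walsh]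
    by_cases hA : A = ∅
    · subst hA
      rw [if_pos rfl]
      rw [show c0 (∅ : Finset (Fin n)) = 0 by simp [hc0def]]
      rw [show fourierCoef h (∅ : Finset (Fin n))
          = (∑ ε : Fin n → Bool, h ε * walsh ∅ ε)/2^n from rfl]
      field_simp
      ring
    · rw [if_neg hA, mul_zero, sub_zero]
      rw [show c0 A = fourierCoef h A by simp [hc0def, hA]]
      rfl
  have hdecomp : heatSemigroup s (fun ε => h ε - fourierCoef h ∅)
      = fun x => ∑ k ∈ Finset.range (n+1), Real.exp (-(s*(k:ℝ))) * G k x := by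
    funext x
    show (∑ A : Finset (Fin n),
        Real.exp (-(s * (A.card:ℝ))) * fourierCoef (fun ε => h ε - fourierCoef h ∅) A * walsh A x)
      = _
    simp_rw [hcoef]
    rw [← Finset.sum_fiberwise_of_maps_to (g := fun A : Finset (Fin n) => A.card)
      (fun A _ => Finset.mem_range.2 (Nat.lt_succ_of_le
        (by simpa using Finset.card_le_univ A)))
      (fun A => Real.exp (-(s * (A.card:ℝ))) * c0 A * walsh A x)]
    apply Finset.sum_congr rfl
    intro k hk
    rw [show G k x = ∑ A ∈ Finset.univ.filter (fun A : Finset (Fin n) => A.card = k),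
        c0 A * walsh A x from rfl]
    rw [Finset.mul_sum]
    apply Finset.sum_congr rfl
    intro A hA
    rw [(Finset.mem_filter.1 hA).2]
    ring
  rw [hdecomp]
  have hM : 0 ≤ pnorm p h := pnorm_nonneg p h
  set x : ℝ := Real.sqrt p * Real.exp (-s) with hxdef
  have hx0 : 0 ≤ x := by positivity
  have hx1 : x < 1 := by
    have hlt := (div_lt_one hes).2 hsp
    rw [div_eq_mul_inv] at hlt
    rw [hxdef, Real.exp_neg]
    exact hlt
  have hGk2 : ∀ k : ℕ, pnorm 2 (G k) ≤ pnorm p h := by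
    intro k
    have h1 : msum 2 (G k) ≤ msum 2 h := by
      have hGeq : G k = fun z => ∑ A : Finset (Fin n),
          (if A.card = k then c0 A else 0) * walsh A z := by
        funext z
        rw [show G k z = ∑ A ∈ Finset.univ.filter (fun A : Finset (Fin n) => A.card = k),
            c0 A * walsh A z from rfl]
        rw [Finset.sum_filter]
        apply Finset.sum_congr rfl
        intro A _
        conv_rhs => rw [ite_mul, zero_mul]
      have e1 : msum 2 (G k) = ∑ A : Finset (Fin n), (if A.card = k then c0 A else 0)^2 := by
        rw [hGeq, msum_two_comb]
      have e2 : msum 2 h = ∑ A : Finset (Fin n), (fourierCoef h A)^2 := by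
        rw [msum_two, ← parseval]
      rw [e1, e2]
      apply Finset.sum_le_sum
      intro A _
      by_cases hcard : A.card = k
      · rw [if_pos hcard]
        by_cases hA : A = ∅
        · rw [show c0 A = 0 by simp [hc0def, hA]]
          simpa using sq_nonneg (fourierCoef h A)
        · rw [show c0 A = fourierCoef h A by simp [hc0def, hA]]
      · rw [if_neg hcard]
        simpa using sq_nonneg (fourierCoef h A)
    have h2 : pnorm 2 (G k) ≤ pnorm 2 h := by
      rw [pnorm_eq_msum, pnorm_eq_msum]
      exact Real.rpow_le_rpow (msum_nonneg _ _) h1 (by norm_num)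
    exact le_trans h2 (pnorm_two_le hp h)
  have hterm : ∀ k ∈ Finset.range (n+1), Real.exp (-(s*(k:ℝ))) * pnorm p (G k)
      ≤ (if k = 0 then 0 else x ^ k * pnorm p h) := by
    intro k hk
    by_cases hk0 : k = 0
    · subst hk0
      rw [if_pos rfl]
      have hG0 : G 0 = fun _ : Fin n → Bool => (0:ℝ) := by
        funext z
        rw [show G 0 z = ∑ A ∈ Finset.univ.filter (fun A : Finset (Fin n) => A.card = 0),
            c0 A * walsh A z from rfl]
        have hfil : Finset.univ.filter (fun A : Finset (Fin n) => A.card = 0) = {∅} := by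
          ext A
          simp [Finset.card_eq_zero]
        rw [hfil]
        rw [Finset.sum_singleton]
        rw [show c0 (∅ : Finset (Fin n)) = 0 by simp [hc0def]]
        ring
      rw [hG0, pnorm_zero hp0, mul_zero]
    · rw [if_neg hk0]
      have hlb := level_bound hp c0 k
      have hchain : pnorm p (G k) ≤ Real.sqrt (p-1) ^ k * pnorm p h := by
        calc pnorm p (G k) ≤ Real.sqrt (p-1)^k * pnorm 2 (G k) := hlb
        _ ≤ Real.sqrt (p-1)^k * pnorm p h :=
            mul_le_mul_of_nonneg_left (hGk2 k) (by positivity)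
      calc Real.exp (-(s*(k:ℝ))) * pnorm p (G k)
          ≤ Real.exp (-(s*(k:ℝ))) * (Real.sqrt (p-1)^k * pnorm p h) :=
            mul_le_mul_of_nonneg_left hchain (Real.exp_nonneg _)
      _ = (Real.sqrt (p-1) * Real.exp (-s))^k * pnorm p h := by
            rw [show -(s*(k:ℝ)) = (k:ℝ) * (-s) by ring, Real.exp_nat_mul, mul_pow]
            ring
      _ ≤ x ^ k * pnorm p h := by
            apply mul_le_mul_of_nonneg_right _ hM
            apply pow_le_pow_left₀ (by positivity)
            rw [hxdef]
            exact mul_le_mul_of_nonneg_right (Real.sqrt_le_sqrt (by linarith))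
              (Real.exp_nonneg _)
  calc pnorm p (fun x_1 => ∑ k ∈ Finset.range (n+1), Real.exp (-(s*(k:ℝ))) * G k x_1)
      ≤ ∑ k ∈ Finset.range (n+1), pnorm p (fun x_1 => Real.exp (-(s*(k:ℝ))) * G k x_1) :=
        pnorm_sum_le (by linarith) (n+1) _
  _ = ∑ k ∈ Finset.range (n+1), Real.exp (-(s*(k:ℝ))) * pnorm p (G k) := by
        apply Finset.sum_congr rfl
        intro k _
        rw [pnorm_smul hp0, abs_of_pos (Real.exp_pos _)]
  _ ≤ ∑ k ∈ Finset.range (n+1), (if k = 0 then 0 else x ^ k * pnorm p h) :=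
        Finset.sum_le_sum hterm
  _ = ∑ k ∈ Finset.range n, x ^ (k+1) * pnorm p h := by
        rw [Finset.sum_range_succ']
        simp
  _ ≤ (x / (1-x)) * pnorm p h := by
        rw [← Finset.sum_mul]
        exact mul_le_mul_of_nonneg_right (geom_aux hx0 hx1 n) hM
  _ = 1 * Real.sqrt p / (Real.exp s - Real.sqrt p) * pnorm p h := by
        congr 1
        have h1 : Real.exp s ≠ 0 := hes.ne'
        have h2 : Real.exp s - Real.sqrt p ≠ 0 := hdiff.ne'
        have h3 : (0:ℝ) < 1 - Real.sqrt p * (Real.exp s)⁻¹ := by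
          rw [← Real.exp_neg, ← hxdef]
          linarith
        rw [hxdef, Real.exp_neg, one_mul]
        rw [div_eq_div_iff h3.ne' hdiff.ne']
        field_simp
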